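/- Let M be a compact connected Riemannian manifold with diameter bounded below away from zero, heat kernel p_s, and fix x ∈ M, ρ > 0. For m ∈ ℕ, let Λ_g^m ⊂ M^{m-1} be the set of tuples (x₁,…,x_{m-1}) with d_g(x_i, x_{i+1}) < ρ for all i = 0,…,m-1 (where x₀ = x_m = x). Then (1/p₁(x,x)) ∫_{Λ_g^m} ∏_{i=0}^{m-1} p_{1/m}(x_i, x_{i+1}) ∏_{i=1}^{m-1} dv_g(x_i) → 1 as m → ∞. -/

import Mathlib

open MeasureTheory Filter Set

/-- The chain of points `x = x₀, x₁, …, x_{m-1}, x_m = x` determined by a tuple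
`z ∈ M^{m-1}` of interior points and the base point `x`. -/
def chainPt {M : Type*} (x : M) (m : ℕ) (z : Fin (m - 1) → M) (j : ℕ) : M :=
  if h : 1 ≤ j ∧ j ≤ m - 1 then z ⟨j - 1, by omega⟩ else x

/-- The product `∏_{i=0}^{m-1} p_{1/m}(x_i, x_{i+1})` with `x₀ = x_m = x`. -/
noncomputable def kernelProd {M : Type*} (p : ℝ → M → M → ℝ) (x : M) (m : ℕ)
    (z : Fin (m - 1) → M) : ℝ :=
  ∏ i ∈ Finset.range m, p (1 / (m : ℝ)) (chainPt x m z i) (chainPt x m z (i + 1))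

/-- `Λ_g^m`: the tuples all of whose consecutive points are at distance `< ρ`. -/
def goodSet {M : Type*} [MetricSpace M] (x : M) (ρ : ℝ) (m : ℕ) :
    Set (Fin (m - 1) → M) :=
  {z | ∀ i < m, dist (chainPt x m z i) (chainPt x m z (i + 1)) < ρ}

section Aux

variable {M : Type*} [MetricSpace M] [CompactSpace M]
    [MeasurableSpace M] [BorelSpace M]
    (vol : Measure M) [IsFiniteMeasure vol] (p : ℝ → M → M → ℝ)

/-- Chain with two prescribed endpoints. -/
def cc (a b : M) (k : ℕ) (z : Fin k → M) (j : ℕ) : M :=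
  if h : 1 ≤ j ∧ j ≤ k then z ⟨j - 1, by omega⟩ else if j = 0 then a else b

lemma cc_zero (a b : M) (k : ℕ) (z : Fin k → M) : cc a b k z 0 = a := by simp [cc]

lemma cc_of_le (a b : M) (k : ℕ) (z : Fin k → M) {j : ℕ} (h1 : 1 ≤ j) (h2 : j ≤ k) :
    cc a b k z j = z ⟨j - 1, by omega⟩ := by simp [cc, h1, h2]

lemma cc_of_gt (a b : M) (k : ℕ) (z : Fin k → M) {j : ℕ} (h : k < j) :
    cc a b k z j = b := by
  have h1 : ¬ (1 ≤ j ∧ j ≤ k) := by omega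
  have h2 : j ≠ 0 := by omega
  simp [cc, h1, h2]

lemma chainPt_eq_cc (x : M) (m : ℕ) (z : Fin (m - 1) → M) (j : ℕ) :
    chainPt x m z j = cc x x (m - 1) z j := by
  unfold chainPt cc
  by_cases h : 1 ≤ j ∧ j ≤ m - 1 <;> simp [h]

lemma cc_snoc (a b b' : M) (k : ℕ) (y : Fin k → M) (w : M) {j : ℕ} (hj : j ≤ k) :
    cc a b (k + 1) (Fin.snoc y w) j = cc a b' k y j := by
  rcases Nat.eq_zero_or_pos j with h0 | h1
  · subst h0; simp [cc_zero]
  · rw [cc_of_le _ _ _ _ h1 (by omega), cc_of_le _ _ _ _ h1 hj]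
    have h : (⟨j - 1, by omega⟩ : Fin (k + 1)) = Fin.castSucc ⟨j - 1, by omega⟩ := rfl
    rw [h, Fin.snoc_castSucc]

lemma cc_snoc_top (a b : M) (k : ℕ) (y : Fin k → M) (w : M) :
    cc a b (k + 1) (Fin.snoc y w) (k + 1) = w := by
  rw [cc_of_le _ _ _ _ (by omega) (le_refl _)]
  have h : (⟨k + 1 - 1, by omega⟩ : Fin (k + 1)) = Fin.last k := by ext; simp
  rw [h, Fin.snoc_last]

lemma continuous_cc (a b : M) (k j : ℕ) : Continuous fun z : Fin k → M => cc a b k z j := by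
  by_cases h : 1 ≤ j ∧ j ≤ k
  · simpa [cc, h] using continuous_apply (⟨j - 1, by omega⟩ : Fin k)
  · by_cases h0 : j = 0 <;> simp only [cc, h, h0, dif_neg, if_true, if_false,
      not_false_iff] <;> exact continuous_const

lemma integrable_cont {X : Type*} [MetricSpace X] [CompactSpace X]
    [MeasurableSpace X] [BorelSpace X] (μ : Measure X) [IsFiniteMeasure μ]
    {f : X → ℝ} (hf : Continuous f) : Integrable f μ :=
  hf.integrable_of_hasCompactSupport (HasCompactSupport.of_compactSpace f)

/-- Peel the last coordinate off a `Fin (k+1)`-indexed product integral. -/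
lemma integral_snoc (k : ℕ) (F : (Fin (k + 1) → M) → ℝ) (hF : Continuous F) :
    ∫ z : Fin (k + 1) → M, F z ∂(Measure.pi fun _ => vol)
      = ∫ y : Fin k → M, ∫ w : M, F (Fin.snoc y w) ∂vol ∂(Measure.pi fun _ => vol) := by
  set e := MeasurableEquiv.piFinSuccAbove (fun _ : Fin (k + 1) => M) (Fin.last k) with he
  set G : M × (Fin k → M) → ℝ := fun q => F (Fin.snoc q.2 q.1) with hG
  have hsymm : ∀ q : M × (Fin k → M), e.symm q = Fin.snoc q.2 q.1 := by
    intro q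
    simp [he, MeasurableEquiv.piFinSuccAbove, Fin.snocEquiv]
  have hGe : ∀ z, G (e z) = F z := by
    intro z
    have : Fin.snoc (e z).2 (e z).1 = z := by rw [← hsymm (e z), e.symm_apply_apply]
    simp only [hG, this]
  have hGcont : Continuous G := by
    apply hF.comp
    apply continuous_pi
    intro i
    refine Fin.lastCases ?_ ?_ i
    · simpa [Fin.snoc_last] using continuous_fst
    · intro j
      have h : Continuous fun a : M × (Fin k → M) => a.2 j :=
        (continuous_apply j).comp continuous_snd
      simpa [Fin.snoc_castSucc] using h
  have hmp := measurePreserving_piFinSuccAbove (fun _ : Fin (k + 1) => vol) (Fin.last k)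
  calc ∫ z : Fin (k + 1) → M, F z ∂(Measure.pi fun _ => vol)
      = ∫ z : Fin (k + 1) → M, G (e z) ∂(Measure.pi fun _ => vol) := by
        simp_rw [hGe]
    _ = ∫ q, G q ∂(vol.prod (Measure.pi fun _ : Fin k => vol)) :=
        hmp.integral_comp e.measurableEmbedding G
    _ = ∫ y : Fin k → M, ∫ w : M, G (w, y) ∂vol ∂(Measure.pi fun _ => vol) :=
        integral_prod_symm G (integrable_cont _ hGcont)


lemma pi_fin_zero_prob : IsProbabilityMeasure (Measure.pi fun _ : Fin 0 => vol) :=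
  ⟨by rw [Measure.pi_univ]; simp⟩

lemma continuous_links {t : ℝ} (hc : Continuous fun q : M × M => p t q.1 q.2)
    (a b : M) (k : ℕ) (S : Finset ℕ) :
    Continuous fun z : Fin k → M =>
      ∏ j ∈ S, p t (cc a b k z j) (cc a b k z (j + 1)) :=
  continuous_finset_prod _ fun j _ =>
    hc.comp ((continuous_cc a b k j).prodMk (continuous_cc a b k (j + 1)))

lemma continuous_term {s : ℝ} (hc : Continuous fun q : M × M => p s q.1 q.2)
    (a b : M) (k i : ℕ) :
    Continuous fun z : Fin k → M => p s (cc a b k z i) b :=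
  hc.comp ((continuous_cc a b k i).prodMk continuous_const)

/-- The full chain integral with a terminal factor of time `s`. -/
lemma chain_int_semi
    (hcont : ∀ s : ℝ, 0 < s → Continuous fun q : M × M => p s q.1 q.2)
    (hsemi : ∀ s₁ s₂ : ℝ, 0 < s₁ → 0 < s₂ → ∀ y z : M,
      p (s₁ + s₂) y z = ∫ w, p s₁ y w * p s₂ w z ∂vol) :
    ∀ (k : ℕ) (s : ℝ), 0 < s → ∀ (t : ℝ), 0 < t → ∀ a b : M,
    ∫ z : Fin k → M,
        (∏ j ∈ Finset.range k, p t (cc a b k z j) (cc a b k z (j + 1)))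
          * p s (cc a b k z k) b ∂(Measure.pi fun _ => vol)
      = p ((k : ℝ) * t + s) a b := by
  intro k
  induction k with
  | zero =>
    intro s hs t ht a b
    haveI := pi_fin_zero_prob vol
    simp [cc_zero]
  | succ k ih =>
    intro s hs t ht a b
    have hFc : Continuous fun z : Fin (k + 1) → M =>
        (∏ j ∈ Finset.range (k + 1), p t (cc a b (k + 1) z j) (cc a b (k + 1) z (j + 1)))
          * p s (cc a b (k + 1) z (k + 1)) b :=
      (continuous_links p (hcont t ht) a b (k + 1) _).mul
        (continuous_term p (hcont s hs) a b (k + 1) (k + 1))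
    rw [integral_snoc vol (k := k) _ hFc]
    have key : ∀ (y : Fin k → M) (w : M),
        (∏ j ∈ Finset.range (k + 1),
            p t (cc a b (k + 1) (Fin.snoc y w) j) (cc a b (k + 1) (Fin.snoc y w) (j + 1)))
          * p s (cc a b (k + 1) (Fin.snoc y w) (k + 1)) b
        = (∏ j ∈ Finset.range k, p t (cc a b k y j) (cc a b k y (j + 1)))
          * (p t (cc a b k y k) w * p s w b) := by
      intro y w
      have hprod : (∏ j ∈ Finset.range k,
          p t (cc a b (k + 1) (Fin.snoc y w) j) (cc a b (k + 1) (Fin.snoc y w) (j + 1)))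
          = ∏ j ∈ Finset.range k, p t (cc a b k y j) (cc a b k y (j + 1)) := by
        refine Finset.prod_congr rfl fun j hj => ?_
        have hj' : j < k := Finset.mem_range.mp hj
        rw [cc_snoc a b b k y w (by omega), cc_snoc a b b k y w (by omega)]
      rw [Finset.prod_range_succ, cc_snoc_top,
        cc_snoc a b b k y w (le_refl k), hprod, mul_assoc]
    simp_rw [key]
    have inner : ∀ y : Fin k → M,
        ∫ w, (∏ j ∈ Finset.range k, p t (cc a b k y j) (cc a b k y (j + 1)))
            * (p t (cc a b k y k) w * p s w b) ∂vol
          = (∏ j ∈ Finset.range k, p t (cc a b k y j) (cc a b k y (j + 1)))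
            * p (t + s) (cc a b k y k) b := by
      intro y
      rw [integral_const_mul, ← hsemi t s ht hs _ b]
    simp_rw [inner]
    rw [ih (t + s) (by positivity) t ht a b]
    congr 1
    push_cast
    ring

/-- The chain integral with no terminal factor integrates to one. -/
lemma chain_int_one
    (hcont : ∀ s : ℝ, 0 < s → Continuous fun q : M × M => p s q.1 q.2)
    (hsymm : ∀ s : ℝ, 0 < s → ∀ y z, p s y z = p s z y)
    (hcomplete : ∀ s : ℝ, 0 < s → ∀ z : M, ∫ y, p s y z ∂vol = 1) :
    ∀ (k : ℕ) (t : ℝ), 0 < t → ∀ a b : M,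
    ∫ z : Fin k → M,
        ∏ j ∈ Finset.range k, p t (cc a b k z j) (cc a b k z (j + 1))
        ∂(Measure.pi fun _ => vol) = 1 := by
  intro k
  induction k with
  | zero =>
    intro t ht a b
    haveI := pi_fin_zero_prob vol
    simp
  | succ k ih =>
    intro t ht a b
    rw [integral_snoc vol (k := k) _ (continuous_links p (hcont t ht) a b (k + 1) _)]
    have key : ∀ (y : Fin k → M) (w : M),
        (∏ j ∈ Finset.range (k + 1),
            p t (cc a b (k + 1) (Fin.snoc y w) j) (cc a b (k + 1) (Fin.snoc y w) (j + 1)))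
        = (∏ j ∈ Finset.range k, p t (cc a b k y j) (cc a b k y (j + 1)))
          * p t (cc a b k y k) w := by
      intro y w
      rw [Finset.prod_range_succ, cc_snoc_top, cc_snoc a b b k y w (le_refl k)]
      congr 1
      refine Finset.prod_congr rfl fun j hj => ?_
      have hj' : j < k := Finset.mem_range.mp hj
      rw [cc_snoc a b b k y w (by omega), cc_snoc a b b k y w (by omega)]
    simp_rw [key]
    have inner : ∀ y : Fin k → M,
        ∫ w, (∏ j ∈ Finset.range k, p t (cc a b k y j) (cc a b k y (j + 1)))
            * p t (cc a b k y k) w ∂vol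
          = ∏ j ∈ Finset.range k, p t (cc a b k y j) (cc a b k y (j + 1)) := by
      intro y
      rw [integral_const_mul]
      have h1 : ∫ w, p t (cc a b k y k) w ∂vol = 1 := by
        simp_rw [fun w => hsymm t ht (cc a b k y k) w]
        exact hcomplete t ht _
      rw [h1, mul_one]
    simp_rw [inner]
    exact ih t ht a b

/-- The chain integral with one dropped link integrates to one. -/
lemma chain_int_drop
    (hcont : ∀ s : ℝ, 0 < s → Continuous fun q : M × M => p s q.1 q.2)
    (hsymm : ∀ s : ℝ, 0 < s → ∀ y z, p s y z = p s z y)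
    (hsemi : ∀ s₁ s₂ : ℝ, 0 < s₁ → 0 < s₂ → ∀ y z : M,
      p (s₁ + s₂) y z = ∫ w, p s₁ y w * p s₂ w z ∂vol)
    (hcomplete : ∀ s : ℝ, 0 < s → ∀ z : M, ∫ y, p s y z ∂vol = 1) :
    ∀ (k i : ℕ), i ≤ k → ∀ (s : ℝ), 0 < s → ∀ (t : ℝ), 0 < t → ∀ a b : M,
    ∫ z : Fin k → M,
        (∏ j ∈ (Finset.range k).erase i, p t (cc a b k z j) (cc a b k z (j + 1)))
          * (if i = k then 1 else p s (cc a b k z k) b)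
        ∂(Measure.pi fun _ => vol) = 1 := by
  intro k
  induction k with
  | zero =>
    intro i hi s hs t ht a b
    haveI := pi_fin_zero_prob vol
    interval_cases i
    simp
  | succ k ih =>
    intro i hi s hs t ht a b
    by_cases hik : i = k + 1
    · subst hik
      simp only [eq_self_iff_true, if_true, mul_one,
        Finset.erase_eq_of_notMem (by simp : (k + 1 : ℕ) ∉ Finset.range (k + 1))]
      exact chain_int_one vol p hcont hsymm hcomplete (k + 1) t ht a b
    · simp only [if_neg hik]
      have hFc : Continuous fun z : Fin (k + 1) → M =>
          (∏ j ∈ (Finset.range (k + 1)).erase i,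
              p t (cc a b (k + 1) z j) (cc a b (k + 1) z (j + 1)))
            * p s (cc a b (k + 1) z (k + 1)) b :=
        (continuous_links p (hcont t ht) a b (k + 1) _).mul
          (continuous_term p (hcont s hs) a b (k + 1) (k + 1))
      rw [integral_snoc vol (k := k) _ hFc]
      by_cases hik2 : i = k
      · subst hik2
        have hset : (Finset.range (i + 1)).erase i = Finset.range i := by
          rw [Finset.range_add_one, Finset.erase_insert (by simp)]
        have key : ∀ (y : Fin i → M) (w : M),
            (∏ j ∈ (Finset.range (i + 1)).erase i,
                p t (cc a b (i + 1) (Fin.snoc y w) j) (cc a b (i + 1) (Fin.snoc y w) (j + 1)))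
              * p s (cc a b (i + 1) (Fin.snoc y w) (i + 1)) b
            = (∏ j ∈ Finset.range i, p t (cc a b i y j) (cc a b i y (j + 1)))
              * p s w b := by
          intro y w
          rw [hset, cc_snoc_top]
          congr 1
          refine Finset.prod_congr rfl fun j hj => ?_
          have hj' : j < i := Finset.mem_range.mp hj
          rw [cc_snoc a b b i y w (by omega), cc_snoc a b b i y w (by omega)]
        simp_rw [key]
        have inner : ∀ y : Fin i → M,
            ∫ w, (∏ j ∈ Finset.range i, p t (cc a b i y j) (cc a b i y (j + 1)))
                * p s w b ∂vol
              = ∏ j ∈ Finset.range i, p t (cc a b i y j) (cc a b i y (j + 1)) := by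
          intro y
          rw [integral_const_mul, hcomplete s hs b, mul_one]
        simp_rw [inner]
        exact chain_int_one vol p hcont hsymm hcomplete i t ht a b
      · have hik3 : i < k := by omega
        have hset : (Finset.range (k + 1)).erase i
            = insert k ((Finset.range k).erase i) := by
          rw [Finset.range_add_one, Finset.erase_insert_of_ne (by omega)]
        have key : ∀ (y : Fin k → M) (w : M),
            (∏ j ∈ (Finset.range (k + 1)).erase i,
                p t (cc a b (k + 1) (Fin.snoc y w) j) (cc a b (k + 1) (Fin.snoc y w) (j + 1)))
              * p s (cc a b (k + 1) (Fin.snoc y w) (k + 1)) b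
            = (∏ j ∈ (Finset.range k).erase i, p t (cc a b k y j) (cc a b k y (j + 1)))
              * (p t (cc a b k y k) w * p s w b) := by
          intro y w
          have hprod : (∏ j ∈ (Finset.range k).erase i,
              p t (cc a b (k + 1) (Fin.snoc y w) j) (cc a b (k + 1) (Fin.snoc y w) (j + 1)))
              = ∏ j ∈ (Finset.range k).erase i, p t (cc a b k y j) (cc a b k y (j + 1)) := by
            refine Finset.prod_congr rfl fun j hj => ?_
            have hj' : j < k := Finset.mem_range.mp (Finset.mem_of_mem_erase hj)
            rw [cc_snoc a b b k y w (by omega), cc_snoc a b b k y w (by omega)]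
          rw [hset, Finset.prod_insert (by simp), cc_snoc_top,
            cc_snoc a b b k y w (le_refl k), hprod]
          ring
        simp_rw [key]
        have inner : ∀ y : Fin k → M,
            ∫ w, (∏ j ∈ (Finset.range k).erase i, p t (cc a b k y j) (cc a b k y (j + 1)))
                * (p t (cc a b k y k) w * p s w b) ∂vol
              = (∏ j ∈ (Finset.range k).erase i, p t (cc a b k y j) (cc a b k y (j + 1)))
                * p (t + s) (cc a b k y k) b := by
          intro y
          rw [integral_const_mul, ← hsemi t s ht hs _ b]
        simp_rw [inner]
        have := ih i (by omega) (t + s) (by positivity) t ht a b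
        simp only [if_neg hik2] at this
        exact this

end Aux

/-- Finite-dimensional approximation: for the heat kernel `p` of a compact Riemannian
manifold (positive, symmetric, with the semigroup property, stochastic completeness
and a Gaussian off-diagonal upper bound), the normalised heat-kernel mass of the
good set `Λ_g^m` tends to `1` as `m → ∞`:
`(1/p₁(x,x)) ∫_{Λ_g^m} ∏ p_{1/m}(x_i,x_{i+1}) ∏ dv_g(x_i) → 1`. -/
theorem stmt_4 {M : Type*} [MetricSpace M] [CompactSpace M] [ConnectedSpace M]
    [MeasurableSpace M] [BorelSpace M]
    (vol : Measure M) [IsFiniteMeasure vol]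
    (p : ℝ → M → M → ℝ) (n : ℕ) (x : M) (ρ : ℝ) (hρ : 0 < ρ)
    (hcont : ∀ s : ℝ, 0 < s → Continuous fun q : M × M => p s q.1 q.2)
    (hpos : ∀ s : ℝ, 0 < s → ∀ y z, 0 < p s y z)
    (hsymm : ∀ s : ℝ, 0 < s → ∀ y z, p s y z = p s z y)
    (hsemi : ∀ s₁ s₂ : ℝ, 0 < s₁ → 0 < s₂ → ∀ y z : M,
      p (s₁ + s₂) y z = ∫ w, p s₁ y w * p s₂ w z ∂vol)
    (hcomplete : ∀ s : ℝ, 0 < s → ∀ z : M, ∫ y, p s y z ∂vol = 1)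
    (hgauss : ∀ᶠ m : ℕ in atTop, ∀ y z : M, ρ ≤ dist y z →
      p (1 / (m : ℝ)) y z ≤
        2 * ((m : ℝ) / (4 * Real.pi)) ^ ((n : ℝ) / 2) * Real.exp (-(m : ℝ) * ρ ^ 2 / 4)) :
    Tendsto (fun m : ℕ => (p 1 x x)⁻¹ *
        ∫ z in goodSet x ρ m, kernelProd p x m z
          ∂(Measure.pi fun _ : Fin (m - 1) => vol))
      atTop (nhds 1) := by
  have hc : 0 < p 1 x x := hpos 1 one_pos x x
  set b : ℕ → ℝ := fun m => (m : ℝ) *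
    (2 * ((m : ℝ) / (4 * Real.pi)) ^ ((n : ℝ) / 2) * Real.exp (-(m : ℝ) * ρ ^ 2 / 4)) with hbdef
  have hπ : (0 : ℝ) < 4 * Real.pi := by positivity
  -- the bound sequence tends to zero
  have hb0 : Tendsto b atTop (nhds 0) := by
    have h2 : Tendsto (fun y : ℝ => 2 * (4 * Real.pi) ^ (-((n : ℝ) / 2)) *
        (y ^ ((n : ℝ) / 2 + 1) * Real.exp (-(ρ ^ 2 / 4) * y))) atTop (nhds 0) := by
      have := (tendsto_rpow_mul_exp_neg_mul_atTop_nhds_zero ((n : ℝ) / 2 + 1) (ρ ^ 2 / 4)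
        (by positivity)).const_mul (2 * (4 * Real.pi) ^ (-((n : ℝ) / 2)))
      simpa using this
    have heq : (fun y : ℝ => 2 * (4 * Real.pi) ^ (-((n : ℝ) / 2)) *
        (y ^ ((n : ℝ) / 2 + 1) * Real.exp (-(ρ ^ 2 / 4) * y)))
        =ᶠ[atTop] fun y : ℝ =>
          y * (2 * (y / (4 * Real.pi)) ^ ((n : ℝ) / 2) * Real.exp (-y * ρ ^ 2 / 4)) := by
      filter_upwards [eventually_gt_atTop (0 : ℝ)] with y hy
      rw [Real.div_rpow hy.le hπ.le, Real.rpow_add hy, Real.rpow_one,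
        Real.rpow_neg hπ.le, show -y * ρ ^ 2 / 4 = -(ρ ^ 2 / 4) * y by ring]
      ring
    exact (h2.congr' heq).comp tendsto_natCast_atTop_atTop
  -- the main estimate
  have hmain : ∀ᶠ m : ℕ in atTop,
      p 1 x x - b m ≤ (∫ z in goodSet x ρ m, kernelProd p x m z
          ∂(Measure.pi fun _ : Fin (m - 1) => vol)) ∧
      (∫ z in goodSet x ρ m, kernelProd p x m z
          ∂(Measure.pi fun _ : Fin (m - 1) => vol)) ≤ p 1 x x := by
    filter_upwards [hgauss, eventually_ge_atTop 1] with m hg hm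
    obtain ⟨k, rfl⟩ : ∃ k, m = k + 1 := ⟨m - 1, (Nat.succ_pred_eq_of_pos hm).symm⟩
    set K : Measure (Fin (k + 1 - 1) → M) := Measure.pi fun _ => vol with hK
    set t : ℝ := 1 / ((k + 1 : ℕ) : ℝ) with htdef
    have ht : 0 < t := by rw [htdef]; positivity
    have hchain : ∀ (z : Fin (k + 1 - 1) → M) (j : ℕ),
        chainPt x (k + 1) z j = cc x x k z j := fun z j => chainPt_eq_cc x (k + 1) z j
    have hker : ∀ z, kernelProd p x (k + 1) z =
        ∏ j ∈ Finset.range (k + 1), p t (cc x x k z j) (cc x x k z (j + 1)) := by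
      intro z
      unfold kernelProd
      exact Finset.prod_congr rfl fun j _ => by rw [hchain, hchain]
    have hker2 : ∀ z, kernelProd p x (k + 1) z =
        (∏ j ∈ Finset.range k, p t (cc x x k z j) (cc x x k z (j + 1)))
          * p t (cc x x k z k) x := by
      intro z
      rw [hker z, Finset.prod_range_succ, cc_of_gt x x k z (j := k + 1) (by omega)]
    have hFcont : Continuous (kernelProd p x (k + 1)) := by
      have h := continuous_links p (hcont t ht) x x k (Finset.range (k + 1))
      exact (funext hker : kernelProd p x (k + 1) = _) ▸ h
    have hFint : Integrable (kernelProd p x (k + 1)) K := integrable_cont K hFcont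
    have hFpos : ∀ z, 0 < kernelProd p x (k + 1) z := by
      intro z
      rw [hker z]
      exact Finset.prod_pos fun j _ => hpos t ht _ _
    -- total integral
    have htotal : ∫ z, kernelProd p x (k + 1) z ∂K = p 1 x x := by
      simp_rw [hker2]
      have h := chain_int_semi vol p hcont hsemi k t ht t ht x x
      rw [show (k : ℝ) * t + t = 1 by rw [htdef]; push_cast; field_simp] at h
      exact h
    -- measurability of the good set
    have hgood_meas : MeasurableSet (goodSet x ρ (k + 1)) := by
      have hEq : goodSet x ρ (k + 1) = ⋂ (i : ℕ), ⋂ (_ : i < k + 1),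
          {z : Fin (k + 1 - 1) → M |
            dist (cc x x k z i) (cc x x k z (i + 1)) < ρ} := by
        ext z
        simp only [goodSet, Set.mem_setOf_eq, Set.mem_iInter, hchain]
      rw [hEq]
      refine MeasurableSet.iInter fun i => MeasurableSet.iInter fun _ => ?_
      exact (isOpen_lt ((continuous_cc x x k i).dist (continuous_cc x x k (i + 1)))
        continuous_const).measurableSet
    -- the bad sets
    set A : ℕ → Set (Fin (k + 1 - 1) → M) := fun i =>
      {z | ρ ≤ dist (cc x x k z i) (cc x x k z (i + 1))} with hAdef
    have hA_meas : ∀ i, MeasurableSet (A i) := fun i =>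
      (isClosed_le continuous_const
        ((continuous_cc x x k i).dist (continuous_cc x x k (i + 1)))).measurableSet
    set ε : ℝ := 2 * (((k + 1 : ℕ) : ℝ) / (4 * Real.pi)) ^ ((n : ℝ) / 2)
        * Real.exp (-((k + 1 : ℕ) : ℝ) * ρ ^ 2 / 4) with hεdef
    have hε : 0 ≤ ε := by
      rw [hεdef]
      positivity
    -- the dropped-link integrals
    set g : ℕ → (Fin (k + 1 - 1) → M) → ℝ := fun i z =>
      ∏ j ∈ (Finset.range (k + 1)).erase i, p t (cc x x k z j) (cc x x k z (j + 1))
      with hgdef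
    have hg_cont : ∀ i, Continuous (g i) := fun i =>
      continuous_links p (hcont t ht) x x k _
    have hg_int : ∀ i, Integrable (g i) K := fun i => integrable_cont K (hg_cont i)
    have hg_nonneg : ∀ i z, 0 ≤ g i z := fun i z =>
      Finset.prod_nonneg fun j _ => (hpos t ht _ _).le
    have hgi : ∀ i ≤ k, ∫ z, g i z ∂K = 1 := by
      intro i hik
      by_cases hik2 : i = k
      · subst hik2
        have hset : (Finset.range (i + 1)).erase i = Finset.range i := by
          rw [Finset.range_add_one, Finset.erase_insert (by simp)]
        have hd := chain_int_drop vol p hcont hsymm hsemi hcomplete i i le_rfl t ht t ht x x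
        simp only [eq_self_iff_true, if_true, mul_one,
          Finset.erase_eq_of_notMem (by simp : i ∉ Finset.range i)] at hd
        simp only [hgdef, hset]
        exact hd
      · have hik3 : i < k := by omega
        have hset : (Finset.range (k + 1)).erase i
            = insert k ((Finset.range k).erase i) := by
          rw [Finset.range_add_one, Finset.erase_insert_of_ne (by omega)]
        have hd := chain_int_drop vol p hcont hsymm hsemi hcomplete k i (by omega)
          t ht t ht x x
        simp only [if_neg hik2] at hd
        have hgeq : ∀ z, g i z =
            (∏ j ∈ (Finset.range k).erase i, p t (cc x x k z j) (cc x x k z (j + 1)))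
              * p t (cc x x k z k) x := by
          intro z
          simp only [hgdef, hset]
          rw [Finset.prod_insert (by simp), cc_of_gt x x k z (j := k + 1) (by omega)]
          ring
        simp_rw [hgeq]
        exact hd
    -- bound on each bad-set integral
    have hAbound : ∀ i ∈ Finset.range (k + 1), ∫ z in A i, kernelProd p x (k + 1) z ∂K ≤ ε := by
      intro i hi
      have hi' : i < k + 1 := Finset.mem_range.mp hi
      have hstep1 : ∫ z in A i, kernelProd p x (k + 1) z ∂K
          ≤ ∫ z in A i, ε * g i z ∂K := by
        refine setIntegral_mono_on hFint.integrableOn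
          ((hg_int i).const_mul ε).integrableOn (hA_meas i) ?_
        intro z hz
        have hsplit : kernelProd p x (k + 1) z
            = p t (cc x x k z i) (cc x x k z (i + 1)) * g i z := by
          rw [hker z, hgdef]
          exact (Finset.mul_prod_erase _ _ hi).symm
        rw [hsplit]
        exact mul_le_mul_of_nonneg_right (hg _ _ hz) (hg_nonneg i z)
      have hstep2 : ∫ z in A i, ε * g i z ∂K ≤ ∫ z, ε * g i z ∂K :=
        setIntegral_le_integral ((hg_int i).const_mul ε)
          (ae_of_all _ fun z => mul_nonneg hε (hg_nonneg i z))
      have hstep3 : ∫ z, ε * g i z ∂K = ε := by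
        rw [integral_const_mul, hgi i (by omega), mul_one]
      linarith
    -- bound on the bad part
    set U : Set (Fin (k + 1 - 1) → M) := ⋃ i ∈ Finset.range (k + 1), A i with hUdef
    have hU_meas : MeasurableSet U :=
      MeasurableSet.biUnion (Finset.range (k + 1)).countable_toSet fun i _ => hA_meas i
    have hbadsub : (goodSet x ρ (k + 1))ᶜ ⊆ U := by
      intro z hz
      simp only [goodSet, Set.mem_compl_iff, Set.mem_setOf_eq, not_forall] at hz
      obtain ⟨i, hi, hzi⟩ := hz
      refine Set.mem_biUnion (Finset.mem_range.mpr hi) ?_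
      simp only [hAdef, Set.mem_setOf_eq]
      rw [← hchain z i, ← hchain z (i + 1)]
      exact not_lt.mp hzi
    have hbad : ∫ z in (goodSet x ρ (k + 1))ᶜ, kernelProd p x (k + 1) z ∂K
        ≤ b (k + 1) := by
      have h1 : ∫ z in (goodSet x ρ (k + 1))ᶜ, kernelProd p x (k + 1) z ∂K
          ≤ ∫ z in U, kernelProd p x (k + 1) z ∂K :=
        setIntegral_mono_set hFint.integrableOn
          (ae_of_all _ fun z => (hFpos z).le)
          (HasSubset.Subset.eventuallyLE hbadsub)
      have h2 : ∫ z in U, kernelProd p x (k + 1) z ∂K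
          ≤ ∑ i ∈ Finset.range (k + 1), ∫ z in A i, kernelProd p x (k + 1) z ∂K := by
        rw [← integral_indicator hU_meas]
        have hle : ∀ z, U.indicator (kernelProd p x (k + 1)) z
            ≤ ∑ i ∈ Finset.range (k + 1), (A i).indicator (kernelProd p x (k + 1)) z := by
          intro z
          by_cases hz : z ∈ U
          · rw [Set.indicator_of_mem hz]
            obtain ⟨i, hi, hzi⟩ : ∃ i ∈ Finset.range (k + 1), z ∈ A i := by
              simpa [hUdef] using hz
            calc kernelProd p x (k + 1) z
                = (A i).indicator (kernelProd p x (k + 1)) z :=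
                  (Set.indicator_of_mem hzi _).symm
              _ ≤ _ := Finset.single_le_sum
                  (fun j _ => Set.indicator_nonneg (fun w _ => (hFpos w).le) z) hi
          · rw [Set.indicator_of_notMem hz]
            exact Finset.sum_nonneg fun i _ =>
              Set.indicator_nonneg (fun w _ => (hFpos w).le) z
        calc ∫ z, U.indicator (kernelProd p x (k + 1)) z ∂K
            ≤ ∫ z, ∑ i ∈ Finset.range (k + 1),
                (A i).indicator (kernelProd p x (k + 1)) z ∂K :=
              integral_mono (hFint.indicator hU_meas)
                (integrable_finset_sum _ fun i _ => hFint.indicator (hA_meas i)) hle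
          _ = ∑ i ∈ Finset.range (k + 1), ∫ z in A i, kernelProd p x (k + 1) z ∂K := by
              rw [integral_finset_sum _ fun i _ => hFint.indicator (hA_meas i)]
              exact Finset.sum_congr rfl fun i _ => integral_indicator (hA_meas i)
      have h3 : ∑ i ∈ Finset.range (k + 1), ∫ z in A i, kernelProd p x (k + 1) z ∂K
          ≤ ∑ _i ∈ Finset.range (k + 1), ε := Finset.sum_le_sum hAbound
      have h4 : ∑ _i ∈ Finset.range (k + 1), ε = b (k + 1) := by
        rw [Finset.sum_const, Finset.card_range, nsmul_eq_mul, hbdef, hεdef]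
      linarith
    have hbad0 : 0 ≤ ∫ z in (goodSet x ρ (k + 1))ᶜ, kernelProd p x (k + 1) z ∂K :=
      setIntegral_nonneg hgood_meas.compl fun z _ => (hFpos z).le
    have hsplit := integral_add_compl hgood_meas hFint
    rw [htotal] at hsplit
    constructor
    · linarith
    · linarith
  -- squeeze
  have h1 : Tendsto (fun m : ℕ => ∫ z in goodSet x ρ m, kernelProd p x m z
      ∂(Measure.pi fun _ : Fin (m - 1) => vol)) atTop (nhds (p 1 x x)) := by
    refine tendsto_of_tendsto_of_tendsto_of_le_of_le'
      (g := fun m : ℕ => p 1 x x - b m) (h := fun _ : ℕ => p 1 x x)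
      ?_ tendsto_const_nhds ?_ ?_
    · simpa using tendsto_const_nhds.sub hb0
    · exact hmain.mono fun m hm => hm.1
    · exact hmain.mono fun m hm => hm.2
  have h2 := h1.const_mul (p 1 x x)⁻¹
  rw [inv_mul_cancel₀ hc.ne'] at h2
  exact h2
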